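/- Let G be a group such that both the center Z(G) and the quotient G/Z(G) satisfy the weak cancellation law (WCL). Then G satisfies WCL. -/

import Mathlib

/-- `G` is `Z_mon`-cofinite: for every `n ≥ 1` and `g ∈ G`, the set of `n`-th roots of `g`
is either finite or all of `G`. -/
def ZmonCofinite (G : Type*) [Group G] : Prop :=
  ∀ n : ℕ, 1 ≤ n → ∀ g : G,
    {x : G | x ^ n = g}.Finite ∨ {x : G | x ^ n = g} = Set.univ

/-- `G` satisfies the weak cancellation law: for every `n ≥ 1` the map `x ↦ x^n`
is finitely-many-to-one. -/
def WCL (G : Type*) [Group G] : Prop :=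
  ∀ n : ℕ, 1 ≤ n → ∀ a : G, {x : G | x ^ n = a}.Finite

/-- `G` is almost torsion-free: every `n`-socle `G[n]` is finite. -/
def AlmostTorsionFree (G : Type*) [Group G] : Prop :=
  ∀ n : ℕ, 1 ≤ n → {x : G | x ^ n = 1}.Finite

/-- `G` has prime exponent. -/
def HasPrimeExponent (G : Type*) [Group G] : Prop :=
  ∃ p : ℕ, p.Prime ∧ ∀ x : G, x ^ p = 1

/-- If both the center `Z(G)` and the quotient `G/Z(G)` satisfy the weak cancellation
law, then so does `G`. -/
theorem stmt_5 {G : Type*} [Group G]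
    (h₁ : WCL (Subgroup.center G)) (h₂ : WCL (G ⧸ Subgroup.center G)) :
    WCL G := by
  intro n hn a
  have hT : {y : G ⧸ Subgroup.center G | y ^ n = ((a : G ⧸ Subgroup.center G))}.Finite :=
    h₂ n hn a
  have hsub : {x : G | x ^ n = a} ⊆
      ⋃ y ∈ {y : G ⧸ Subgroup.center G | y ^ n = (a : G ⧸ Subgroup.center G)},
        {x : G | x ^ n = a ∧ (x : G ⧸ Subgroup.center G) = y} := by
    intro x hx
    simp only [Set.mem_iUnion, Set.mem_setOf_eq]
    refine ⟨(x : G ⧸ Subgroup.center G), ?_, hx, rfl⟩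
    have : ((x ^ n : G) : G ⧸ Subgroup.center G) = (a : G ⧸ Subgroup.center G) := by
      rw [hx]
    simpa using this
  refine Set.Finite.subset (Set.Finite.biUnion hT ?_) hsub
  intro y hy
  by_cases hne : {x : G | x ^ n = a ∧ (x : G ⧸ Subgroup.center G) = y}.Nonempty
  · obtain ⟨x₀, hx₀n, hx₀y⟩ := hne
    have hroots : {z : Subgroup.center G | z ^ n = 1}.Finite := h₁ n hn 1
    have key : ∀ x ∈ {x : G | x ^ n = a ∧ (x : G ⧸ Subgroup.center G) = y},
        x₀⁻¹ * x ∈ Subgroup.center G ∧ (x₀⁻¹ * x) ^ n = 1 := by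
      rintro x ⟨hxn, hxy⟩
      have hmem : x₀⁻¹ * x ∈ Subgroup.center G := by
        rw [← QuotientGroup.eq]
        rw [hx₀y, hxy]
      refine ⟨hmem, ?_⟩
      have hc : Commute x₀ (x₀⁻¹ * x) :=
        (Subgroup.mem_center_iff.mp hmem) x₀
      have hx : x = x₀ * (x₀⁻¹ * x) := by group
      have : a = x₀ ^ n * (x₀⁻¹ * x) ^ n := by
        rw [← hc.mul_pow, ← hx, hxn]
      rw [hx₀n] at this
      exact (mul_eq_left.mp this.symm)
    have hfin : (((fun z : Subgroup.center G => (z : G)) ''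
        {z : Subgroup.center G | z ^ n = 1})).Finite := hroots.image _
    have : {x : G | x ^ n = a ∧ (x : G ⧸ Subgroup.center G) = y} ⊆
        (fun w : G => x₀ * w) '' ((fun z : Subgroup.center G => (z : G)) ''
          {z : Subgroup.center G | z ^ n = 1}) := by
      intro x hx
      obtain ⟨hmem, hpow⟩ := key x hx
      refine ⟨x₀⁻¹ * x, ⟨⟨x₀⁻¹ * x, hmem⟩, ?_, rfl⟩, by group⟩
      simp only [Set.mem_setOf_eq]
      ext
      simpa using hpow
    exact Set.Finite.subset (hfin.image _) this
  · rw [Set.not_nonempty_iff_eq_empty] at hne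
    simp [hne]
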